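/- arXiv:2407.09149 — 3 statements merged into one kernel-verified Lean document; each statement's English description precedes it below -/
import Mathlib

section
/- Let A be an order complete Banach lattice algebra, let (p_λ)_{λ∈Λ} be a family of elements of A, each of which is both a left band projection and a right band projection, such that p_α p_β = 0 for α ≠ β and p_α p_α = p_α for all α, and let Γ ⊆ Λ × Λ. Then there exists a unique linear map P : A → A such that for every x ≥ 0, P x = sup({p_α x p_β : (α,β) ∈ Γ} ∪ {0}); moreover this P is a band projection on A, i.e., P ∘ P = P and 0 ≤ P x ≤ x for every x ≥ 0. -/
lemma bp_aux_inf_add {A : Type*} [NormedAddCommGroup A] [Lattice A] [HasSolidNorm A] [IsOrderedAddMonoid A] {a b c : A}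
    (ha : 0 ≤ a) (hb : 0 ≤ b) (hc : 0 ≤ c)
    (hab : a ⊓ b = 0) (hac : a ⊓ c = 0) : a ⊓ (b + c) = 0 := by
  refine le_antisymm ?_ (le_inf ha (add_nonneg hb hc))
  have h1 : a ⊓ (b + c) - b ≤ a ⊓ c := by
    refine le_inf (le_trans (sub_le_self _ hb) inf_le_left) ?_
    rw [sub_le_iff_le_add, add_comm c b]
    exact inf_le_right
  rw [hac] at h1
  have h2 : a ⊓ (b + c) ≤ b := by simpa [sub_nonpos] using h1
  have h3 : a ⊓ (b + c) ≤ a ⊓ b := le_inf inf_le_left h2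
  rwa [hab] at h3

lemma bp_aux_sum_disj {A : Type*} [NormedAddCommGroup A] [Lattice A] [HasSolidNorm A] [IsOrderedAddMonoid A] {ι : Type*}
    (a : ι → A) (hnn : ∀ i, 0 ≤ a i) (hdisj : ∀ i j, i ≠ j → a i ⊓ a j = 0)
    (j : ι) (F : Finset ι) (hj : j ∉ F) : a j ⊓ ∑ i ∈ F, a i = 0 := by
  induction F using Finset.cons_induction with
  | empty => simpa using inf_of_le_right (hnn j)
  | cons i F hiF ih =>
    rw [Finset.sum_cons]
    have hji : j ≠ i := by rintro rfl; exact hj (Finset.mem_cons_self _ _)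
    exact bp_aux_inf_add (hnn j) (hnn i) (Finset.sum_nonneg fun k _ => hnn k)
      (hdisj j i hji) (ih (fun h => hj (Finset.mem_cons_of_mem h)))

lemma bp_aux_sum_le {A : Type*} [NormedAddCommGroup A] [Lattice A] [HasSolidNorm A] [IsOrderedAddMonoid A] {ι : Type*}
    (a : ι → A) (hnn : ∀ i, 0 ≤ a i) (hdisj : ∀ i j, i ≠ j → a i ⊓ a j = 0)
    {c : A} (hc : 0 ≤ c) (hle : ∀ i, a i ≤ c) (F : Finset ι) : ∑ i ∈ F, a i ≤ c := by
  induction F using Finset.cons_induction with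
  | empty => simpa using hc
  | cons i F hiF ih =>
    rw [Finset.sum_cons]
    have hd : a i ⊓ ∑ k ∈ F, a k = 0 := bp_aux_sum_disj a hnn hdisj i F hiF
    have hsum : a i + ∑ k ∈ F, a k = a i ⊔ ∑ k ∈ F, a k := by
      have := inf_add_sup (a i) (∑ k ∈ F, a k)
      rw [hd, zero_add] at this
      exact this.symm
    rw [hsum]
    exact sup_le (hle i) ih


/-- In an order complete Banach lattice algebra, given a family of
pairwise orthogonal left-and-right band projections `(p_λ)` and `Γ ⊆ Λ × Λ`, the map
`x ↦ ⋁_{(α,β)∈Γ} p_α x p_β` (on positive elements) extends to a unique linear map,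
which is a band projection. -/
theorem inner_band_projection_exists_unique
    {A : Type*} [NormedAddCommGroup A] [Lattice A] [HasSolidNorm A] [IsOrderedAddMonoid A]
    [NormedSpace ℝ A]
    [PosSMulStrictMono ℝ A] [PosSMulReflectLT ℝ A] [CompleteSpace A]
    -- order completeness
    (order_complete : ∀ S : Set A, S.Nonempty → BddAbove S → ∃ b : A, IsLUB S b)
    (mul : A →ₗ[ℝ] A →ₗ[ℝ] A)
    (mul_assoc : ∀ a b c : A, mul (mul a b) c = mul a (mul b c))
    (norm_mul_le : ∀ a b : A, ‖mul a b‖ ≤ ‖a‖ * ‖b‖)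
    (mul_nonneg : ∀ a b : A, 0 ≤ a → 0 ≤ b → 0 ≤ mul a b)
    {Λ : Type*} (p : Λ → A)
    (hpos : ∀ l, 0 ≤ p l)
    (hL : ∀ l, ∀ x : A, 0 ≤ x → mul (p l) x ≤ x ∧ mul (mul (p l) (p l)) x = mul (p l) x)
    (hR : ∀ l, ∀ x : A, 0 ≤ x → mul x (p l) ≤ x ∧ mul x (mul (p l) (p l)) = mul x (p l))
    (horth : ∀ a b : Λ, a ≠ b → mul (p a) (p b) = 0)
    (hidem : ∀ a : Λ, mul (p a) (p a) = p a)
    (Γ : Set (Λ × Λ)) :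
    (∃! P : A →ₗ[ℝ] A, ∀ x : A, 0 ≤ x →
      IsLUB ({y : A | ∃ ab ∈ Γ, y = mul (p ab.1) (mul x (p ab.2))} ∪ {0}) (P x)) ∧
    ∀ P : A →ₗ[ℝ] A,
      (∀ x : A, 0 ≤ x →
        IsLUB ({y : A | ∃ ab ∈ Γ, y = mul (p ab.1) (mul x (p ab.2))} ∪ {0}) (P x)) →
      (∀ x : A, P (P x) = P x) ∧ (∀ x : A, 0 ≤ x → 0 ≤ P x ∧ P x ≤ x) := by
  classical
  -- the elementary "corner" operators
  set Q : Λ × Λ → A →ₗ[ℝ] A :=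
    fun ab => (mul (p ab.1)).comp ((LinearMap.flip mul) (p ab.2)) with hQdef
  have hQ : ∀ (ab : Λ × Λ) (x : A), Q ab x = mul (p ab.1) (mul x (p ab.2)) := by
    intro ab x; simp [hQdef]
  have hQpos : ∀ (ab : Λ × Λ) (x : A), 0 ≤ x → 0 ≤ Q ab x := by
    intro ab x hx
    rw [hQ]
    exact mul_nonneg _ _ (hpos _) (mul_nonneg _ _ hx (hpos _))
  have hQle : ∀ (ab : Λ × Λ) (x : A), 0 ≤ x → Q ab x ≤ x := by
    intro ab x hx
    rw [hQ]
    exact le_trans (hL ab.1 _ (mul_nonneg _ _ hx (hpos _))).1 (hR ab.2 x hx).1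
  have hQmono : ∀ (ab : Λ × Λ) {x y : A}, x ≤ y → Q ab x ≤ Q ab y := by
    intro ab x y hxy
    have := hQpos ab (y - x) (sub_nonneg.2 hxy)
    rw [map_sub] at this
    exact sub_nonneg.mp this
  have hQidem : ∀ (ab : Λ × Λ) (x : A), Q ab (Q ab x) = Q ab x := by
    intro ab x
    rw [hQ, hQ, mul_assoc (p ab.1) (mul x (p ab.2)) (p ab.2),
      mul_assoc x (p ab.2) (p ab.2), hidem, ← mul_assoc (p ab.1) (p ab.1), hidem]
  have hQorth : ∀ (ab cd : Λ × Λ), ab ≠ cd → ∀ x : A, Q ab (Q cd x) = 0 := by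
    intro ab cd hne x
    rw [hQ, hQ, mul_assoc (p cd.1) (mul x (p cd.2)) (p ab.2),
      ← mul_assoc (p ab.1) (p cd.1)]
    rcases not_and_or.mp (fun h => hne (Prod.ext h.1 h.2)) with h | h
    · rw [horth _ _ h]
      simp
    · rw [mul_assoc x (p cd.2) (p ab.2), horth _ _ (Ne.symm h)]
      simp
  have hQdisj : ∀ (ab cd : Λ × Λ), ab ≠ cd → ∀ x : A, 0 ≤ x →
      Q ab x ⊓ Q cd x = 0 := by
    intro ab cd hne x hx
    set u := Q ab x ⊓ Q cd x with hu
    have hu0 : 0 ≤ u := le_inf (hQpos ab x hx) (hQpos cd x hx)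
    have h1 : Q ab u = 0 := by
      refine le_antisymm ?_ (hQpos ab u hu0)
      have := hQmono ab (inf_le_right : u ≤ Q cd x)
      rwa [hQorth ab cd hne x] at this
    have h2 : u ≤ Q ab x := inf_le_left
    have h3 : Q ab (Q ab x - u) ≤ Q ab x - u :=
      hQle ab _ (sub_nonneg.2 h2)
    rw [map_sub, hQidem, h1, sub_zero] at h3
    exact le_antisymm (by simpa using h3) hu0
  -- index type and finite sums
  set q : Γ → A →ₗ[ℝ] A := fun i => Q i.1 with hqdef
  have hqdisj : ∀ (i j : Γ), i ≠ j → ∀ x : A, 0 ≤ x → q i x ⊓ q j x = 0 :=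
    fun i j hij x hx => hQdisj i.1 j.1 (Subtype.coe_injective.ne hij) x hx
  set Sfin : A → Set A := fun x => Set.range (fun F : Finset Γ => ∑ i ∈ F, q i x)
    with hSdef
  set T : A → Set A :=
    fun x => {y : A | ∃ ab ∈ Γ, y = mul (p ab.1) (mul x (p ab.2))} ∪ {0} with hTdef
  have hmemT : ∀ (x : A) (ab : Λ × Λ) (h : ab ∈ Γ), Q ab x ∈ T x := by
    intro x ab h
    exact Or.inl ⟨ab, h, (hQ ab x)⟩
  have h0T : ∀ x : A, (0 : A) ∈ T x := fun x => Or.inr rfl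
  have hubeq : ∀ x : A, 0 ≤ x → upperBounds (T x) = upperBounds (Sfin x) := by
    intro x hx
    ext c
    constructor
    · intro hc z hz
      obtain ⟨F, rfl⟩ := hz
      exact bp_aux_sum_le (fun i : Γ => q i x) (fun i => hQpos i.1 x hx)
        (fun i j hij => hqdisj i j hij x hx) (hc (h0T x))
        (fun i => hc (hmemT x i.1 i.2)) F
    · intro hc z hz
      rcases hz with ⟨ab, hab, rfl⟩ | hz
      · have : Q ab x ∈ Sfin x := ⟨{(⟨ab, hab⟩ : Γ)}, by simp [hqdef]⟩
        have h := hc this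
        rwa [hQ] at h
      · rw [Set.mem_singleton_iff] at hz
        subst hz
        exact hc ⟨∅, by simp⟩
  -- the supremum function on the positive cone
  have hex : ∀ x : A, ∃ b : A, 0 ≤ x → IsLUB (Sfin x) b := by
    intro x
    by_cases hx : 0 ≤ x
    · obtain ⟨b, hb⟩ := order_complete (Sfin x) ⟨0, ⟨∅, by simp⟩⟩
        ⟨x, fun z hz => by
          obtain ⟨F, rfl⟩ := hz
          exact bp_aux_sum_le (fun i : Γ => q i x) (fun i => hQpos i.1 x hx)
            (fun i j hij => hqdisj i j hij x hx) hx
            (fun i => hQle i.1 x hx) F⟩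
      exact ⟨b, fun _ => hb⟩
    · exact ⟨0, fun h => absurd h hx⟩
  choose s hs using hex
  have hs0 : s 0 = 0 := by
    refine (hs 0 le_rfl).unique ⟨?_, ?_⟩
    · rintro z ⟨F, rfl⟩
      simp
    · intro c hc
      exact hc ⟨∅, by simp⟩
  have hadd : ∀ x y : A, 0 ≤ x → 0 ≤ y → s (x + y) = s x + s y := by
    intro x y hx hy
    refine (hs (x + y) (add_nonneg hx hy)).unique ⟨?_, ?_⟩
    · rintro z ⟨F, rfl⟩
      have heq : (∑ i ∈ F, q i (x + y)) = (∑ i ∈ F, q i x) + ∑ i ∈ F, q i y := by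
        rw [← Finset.sum_add_distrib]
        exact Finset.sum_congr rfl fun i _ => map_add _ _ _
      show (∑ i ∈ F, q i (x + y)) ≤ s x + s y
      rw [heq]
      exact add_le_add ((hs x hx).1 ⟨F, rfl⟩) ((hs y hy).1 ⟨F, rfl⟩)
    · intro c hc
      have key : ∀ F G : Finset Γ,
          (∑ i ∈ F, q i x) + ∑ i ∈ G, q i y ≤ c := by
        intro F G
        have h1 : (∑ i ∈ F, q i x) ≤ ∑ i ∈ F ∪ G, q i x :=
          Finset.sum_le_sum_of_subset_of_nonneg Finset.subset_union_left
            (fun i _ _ => hQpos i.1 x hx)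
        have h2 : (∑ i ∈ G, q i y) ≤ ∑ i ∈ F ∪ G, q i y :=
          Finset.sum_le_sum_of_subset_of_nonneg Finset.subset_union_right
            (fun i _ _ => hQpos i.1 y hy)
        have h3 : (∑ i ∈ F ∪ G, q i x) + ∑ i ∈ F ∪ G, q i y
            = ∑ i ∈ F ∪ G, q i (x + y) := by
          rw [← Finset.sum_add_distrib]
          exact Finset.sum_congr rfl fun i _ => (map_add _ _ _).symm
        calc (∑ i ∈ F, q i x) + ∑ i ∈ G, q i y
            ≤ (∑ i ∈ F ∪ G, q i x) + ∑ i ∈ F ∪ G, q i y := add_le_add h1 h2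
          _ = ∑ i ∈ F ∪ G, q i (x + y) := h3
          _ ≤ c := hc ⟨F ∪ G, rfl⟩
      have h1 : ∀ G : Finset Γ, s x ≤ c - ∑ i ∈ G, q i y := by
        intro G
        refine (hs x hx).2 ?_
        rintro z ⟨F, rfl⟩
        show (∑ i ∈ F, q i x) ≤ c - ∑ i ∈ G, q i y
        rw [le_sub_iff_add_le]
        exact key F G
      have h2 : s y ≤ c - s x := by
        refine (hs y hy).2 ?_
        rintro z ⟨G, rfl⟩
        show (∑ i ∈ G, q i y) ≤ c - s x
        rw [le_sub_iff_add_le, add_comm]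
        exact le_sub_iff_add_le.mp (h1 G)
      rw [add_comm]
      exact le_sub_iff_add_le.mp h2
  have hsmul : ∀ (t : ℝ), 0 ≤ t → ∀ x : A, 0 ≤ x → s (t • x) = t • s x := by
    intro t ht x hx
    rcases eq_or_lt_of_le ht with rfl | ht
    · rw [zero_smul, zero_smul, hs0]
    · refine (hs (t • x) (smul_nonneg ht.le hx)).unique ⟨?_, ?_⟩
      · rintro z ⟨F, rfl⟩
        have heq : (∑ i ∈ F, q i (t • x)) = t • ∑ i ∈ F, q i x := by
          rw [Finset.smul_sum]
          exact Finset.sum_congr rfl fun i _ => map_smul _ _ _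
        show (∑ i ∈ F, q i (t • x)) ≤ t • s x
        rw [heq]
        exact smul_le_smul_of_nonneg_left ((hs x hx).1 ⟨F, rfl⟩) ht.le
      · intro c hc
        rw [← le_inv_smul_iff_of_pos ht]
        refine (hs x hx).2 ?_
        rintro z ⟨F, rfl⟩
        show (∑ i ∈ F, q i x) ≤ t⁻¹ • c
        rw [le_inv_smul_iff_of_pos ht]
        have heq : t • (∑ i ∈ F, q i x) = ∑ i ∈ F, q i (t • x) := by
          rw [Finset.smul_sum]
          exact Finset.sum_congr rfl fun i _ => (map_smul _ _ _).symm
        rw [heq]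
        exact hc ⟨F, rfl⟩
  -- extension to a linear map
  have hkey : ∀ a b : A, 0 ≤ a → 0 ≤ b →
      s ((a - b)⁺) - s ((a - b)⁻) = s a - s b := by
    intro a b ha hb
    have h2 : (a - b)⁺ - (a - b)⁻ = a - b := posPart_sub_negPart _
    have h3 : (a - b)⁺ + b = a + (a - b)⁻ := sub_eq_sub_iff_add_eq_add.mp h2
    have h4 : s ((a - b)⁺) + s b = s a + s ((a - b)⁻) := by
      rw [← hadd _ _ (posPart_nonneg _) hb, ← hadd _ _ ha (negPart_nonneg _), h3]
    exact sub_eq_sub_iff_add_eq_add.mpr h4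
  set P : A →ₗ[ℝ] A :=
    { toFun := fun x => s (x⁺) - s (x⁻)
      map_add' := by
        intro x y
        show s ((x + y)⁺) - s ((x + y)⁻) = (s (x⁺) - s (x⁻)) + (s (y⁺) - s (y⁻))
        have hdecomp : x + y = (x⁺ + y⁺) - (x⁻ + y⁻) := by
          calc x + y = (x⁺ - x⁻) + (y⁺ - y⁻) := by
                rw [posPart_sub_negPart, posPart_sub_negPart]
            _ = (x⁺ + y⁺) - (x⁻ + y⁻) := by abel
        rw [hdecomp, hkey _ _ (add_nonneg (posPart_nonneg _) (posPart_nonneg _))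
            (add_nonneg (negPart_nonneg _) (negPart_nonneg _)),
          hadd _ _ (posPart_nonneg _) (posPart_nonneg _),
          hadd _ _ (negPart_nonneg _) (negPart_nonneg _)]
        abel
      map_smul' := by
        intro t x
        show s ((t • x)⁺) - s ((t • x)⁻) = t • (s (x⁺) - s (x⁻))
        rcases le_or_gt 0 t with ht | ht
        · have hdecomp : t • x = t • x⁺ - t • x⁻ := by
            rw [← smul_sub, posPart_sub_negPart]
          rw [hdecomp, hkey _ _ (smul_nonneg ht (posPart_nonneg _))
              (smul_nonneg ht (negPart_nonneg _)),
            hsmul t ht _ (posPart_nonneg _), hsmul t ht _ (negPart_nonneg _),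
            smul_sub]
        · have hdecomp : t • x = (-t) • x⁻ - (-t) • x⁺ := by
            calc t • x = t • (x⁺ - x⁻) := by rw [posPart_sub_negPart]
              _ = (-t) • x⁻ - (-t) • x⁺ := by
                  rw [smul_sub, neg_smul, neg_smul]; abel
          rw [hdecomp, hkey _ _ (smul_nonneg (neg_nonneg.mpr ht.le) (negPart_nonneg _))
              (smul_nonneg (neg_nonneg.mpr ht.le) (posPart_nonneg _)),
            hsmul (-t) (neg_nonneg.mpr ht.le) _ (negPart_nonneg _),
            hsmul (-t) (neg_nonneg.mpr ht.le) _ (posPart_nonneg _),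
            neg_smul, neg_smul, smul_sub]
          abel } with hPdef
  have hPapply : ∀ x : A, P x = s (x⁺) - s (x⁻) := fun x => rfl
  have hPprop : ∀ x : A, 0 ≤ x → IsLUB (T x) (P x) := by
    intro x hx
    have hx1 : x⁺ = x := posPart_eq_self.mpr hx
    have hx2 : x⁻ = 0 := negPart_eq_zero.mpr hx
    have hPx : P x = s x := by rw [hPapply, hx1, hx2, hs0, sub_zero]
    rw [hPx]
    exact ⟨(hubeq x hx) ▸ (hs x hx).1, (hubeq x hx) ▸ (hs x hx).2⟩
  -- band projection properties for any P' with the lub property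
  have hbp : ∀ P' : A →ₗ[ℝ] A, (∀ x : A, 0 ≤ x → IsLUB (T x) (P' x)) →
      (∀ x : A, P' (P' x) = P' x) ∧ (∀ x : A, 0 ≤ x → 0 ≤ P' x ∧ P' x ≤ x) := by
    intro P' hP'
    have hbound : ∀ x : A, 0 ≤ x → 0 ≤ P' x ∧ P' x ≤ x := by
      intro x hx
      refine ⟨(hP' x hx).1 (h0T x), (hP' x hx).2 ?_⟩
      rintro z (⟨ab, hab, rfl⟩ | hz)
      · have := hQle ab x hx
        rwa [hQ] at this
      · rw [Set.mem_singleton_iff] at hz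
        subst hz
        exact hx
    have hidemP : ∀ x : A, 0 ≤ x → P' (P' x) = P' x := by
      intro x hx
      have h0 : 0 ≤ P' x := (hbound x hx).1
      have hle : P' x ≤ x := (hbound x hx).2
      have hQfix : ∀ ab ∈ Γ, Q ab (P' x) = Q ab x := by
        intro ab hab
        refine le_antisymm (hQmono ab hle) ?_
        calc Q ab x = Q ab (Q ab x) := (hQidem ab x).symm
          _ ≤ Q ab (P' x) := hQmono ab ((hP' x hx).1 (hmemT x ab hab))
      have hTeq : T (P' x) = T x := by
        ext z
        simp only [hTdef, Set.mem_union, Set.mem_setOf_eq, Set.mem_singleton_iff]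
        constructor
        · rintro (⟨ab, hab, rfl⟩ | hz)
          · refine Or.inl ⟨ab, hab, ?_⟩
            have := hQfix ab hab
            rw [hQ, hQ] at this
            rw [this]
          · exact Or.inr hz
        · rintro (⟨ab, hab, rfl⟩ | hz)
          · refine Or.inl ⟨ab, hab, ?_⟩
            have := hQfix ab hab
            rw [hQ, hQ] at this
            rw [this]
          · exact Or.inr hz
      have h1 : IsLUB (T x) (P' (P' x)) := hTeq ▸ hP' (P' x) h0
      exact h1.unique (hP' x hx)
    refine ⟨?_, hbound⟩
    intro x
    have hdecomp : P' x = P' (x⁺) - P' (x⁻) := by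
      rw [← map_sub, posPart_sub_negPart]
    rw [hdecomp, map_sub, hidemP _ (posPart_nonneg _), hidemP _ (negPart_nonneg _)]
  refine ⟨⟨P, hPprop, ?_⟩, fun P' hP' => hbp P' hP'⟩
  intro P' hP'
  apply LinearMap.ext
  intro x
  have hposeq : ∀ y : A, 0 ≤ y → P' y = P y := fun y hy =>
    (hP' y hy).unique (hPprop y hy)
  rw [← posPart_sub_negPart x, map_sub, map_sub,
    hposeq _ (posPart_nonneg _), hposeq _ (negPart_nonneg _)]
end

section
/- Let A be an order complete Banach lattice algebra, let (p_λ)_{λ∈Λ} be a family of elements of A, each of which is both a left band projection and a right band projection, such that p_α p_β = 0 for α ≠ β and p_α p_α = p_α for all α. For Γ ⊆ Λ × Λ let P_Γ : A → A denote the unique linear band projection satisfying P_Γ x = sup({p_α x p_β : (α,β) ∈ Γ} ∪ {0}) for x ≥ 0. Then for all Γ, Δ ⊆ Λ × Λ: P_Γ ∘ P_Δ = P_{Γ∩Δ}, and P_Γ + P_Δ − P_Γ ∘ P_Δ = P_{Γ∪Δ}; in particular, the inner band projections {P_Γ : Γ ⊆ Λ × Λ} form a Boolean algebra with minimum P_∅,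 maximum P_{Λ×Λ}, infimum P_Γ ∧ P_Δ = P_{Γ∩Δ}, supremum P_Γ ∨ P_Δ = P_{Γ∪Δ}, and complement P_{(Λ×Λ)∖Γ}. -/
section aux

variable {A : Type*} [NormedAddCommGroup A] [Lattice A] [IsOrderedAddMonoid A] [HasSolidNorm A]
    [NormedSpace ℝ A]

lemma lub_map_aux (T : A →ₗ[ℝ] A) (hT : ∀ y : A, 0 ≤ y → 0 ≤ T y ∧ T y ≤ y)
    {S : Set A} {s : A} (hs : IsLUB S s) :
    IsLUB (T '' S) (T s) := by
  constructor
  · rintro _ ⟨t, ht, rfl⟩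
    have h1 : (0:A) ≤ s - t := sub_nonneg.2 (hs.1 ht)
    have h2 := (hT _ h1).1
    rw [map_sub] at h2
    exact sub_nonneg.1 h2
  · intro u hu
    have hub : ∀ t ∈ S, t ≤ u + (s - T s) := by
      intro t ht
      have h1 : T t ≤ u := hu ⟨t, ht, rfl⟩
      have h0 : (0:A) ≤ s - t := sub_nonneg.2 (hs.1 ht)
      have h2 := (hT _ h0).2
      rw [map_sub] at h2
      have h3 : t - T t ≤ s - T s := by
        rw [sub_le_sub_iff, add_comm]
        exact sub_le_sub_iff.mp h2
      calc t = T t + (t - T t) := by abel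
        _ ≤ u + (s - T s) := add_le_add h1 h3
    have h4 : s ≤ u + (s - T s) := hs.2 hub
    have h5 : s - (s - T s) ≤ u := sub_le_iff_le_add.mpr h4
    simpa using h5

lemma band_inf_aux (P Q : A →ₗ[ℝ] A)
    (hP : ∀ y : A, 0 ≤ y → 0 ≤ P y ∧ P y ≤ y)
    (hQ : ∀ y : A, 0 ≤ y → 0 ≤ Q y ∧ Q y ≤ y)
    {x : A} (hx : 0 ≤ x) (hPP : P (P x) = P x) (hQQ : Q (Q x) = Q x) :
    P x ⊓ Q x = P (Q x) := by
  set z := P x ⊓ Q x with hz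
  have hz0 : (0:A) ≤ z := le_inf (hP x hx).1 (hQ x hx).1
  have hzP : z ≤ P x := inf_le_left
  have hzQ : z ≤ Q x := inf_le_right
  have hzx : z ≤ x := le_trans hzQ (hQ x hx).2
  have hPz : P z = z := by
    have h1 : P z ≤ z := (hP z hz0).2
    have h2 : P (P x - z) ≤ P x - z := (hP _ (sub_nonneg.2 hzP)).2
    rw [map_sub, hPP] at h2
    have h3 : z ≤ P z := by
      have := sub_le_sub_iff.mp h2
      rwa [add_le_add_iff_left] at this
    exact le_antisymm h1 h3
  have hQz : Q z = z := by
    have h1 : Q z ≤ z := (hQ z hz0).2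
    have h2 : Q (Q x - z) ≤ Q x - z := (hQ _ (sub_nonneg.2 hzQ)).2
    rw [map_sub, hQQ] at h2
    have h3 : z ≤ Q z := by
      have := sub_le_sub_iff.mp h2
      rwa [add_le_add_iff_left] at this
    exact le_antisymm h1 h3
  have hle : z ≤ P (Q x) := by
    have hQmono : Q z ≤ Q x := by
      have := (hQ _ (sub_nonneg.2 hzx)).1
      rw [map_sub] at this
      exact sub_nonneg.1 this
    have hPmono : P (Q z) ≤ P (Q x) := by
      have := (hP _ (sub_nonneg.2 hQmono)).1
      rw [map_sub] at this
      exact sub_nonneg.1 this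
    calc z = P (Q z) := by rw [hQz, hPz]
      _ ≤ P (Q x) := hPmono
  have hge : P (Q x) ≤ z := by
    refine le_inf ?_ ?_
    · have hQx : Q x ≤ x := (hQ x hx).2
      have := (hP _ (sub_nonneg.2 hQx)).1
      rw [map_sub] at this
      exact sub_nonneg.1 this
    · exact (hP _ (hQ x hx).1).2
  exact le_antisymm hle hge

lemma key_comp_aux
    (mul : A →ₗ[ℝ] A →ₗ[ℝ] A)
    (mul_assoc : ∀ a b c : A, mul (mul a b) c = mul a (mul b c))
    (mul_nonneg : ∀ a b : A, 0 ≤ a → 0 ≤ b → 0 ≤ mul a b)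
    {Λ : Type*} (p : Λ → A)
    (hpos : ∀ l, 0 ≤ p l)
    (hL : ∀ l, ∀ x : A, 0 ≤ x → mul (p l) x ≤ x ∧ mul (mul (p l) (p l)) x = mul (p l) x)
    (hR : ∀ l, ∀ x : A, 0 ≤ x → mul x (p l) ≤ x ∧ mul x (mul (p l) (p l)) = mul x (p l))
    (horth : ∀ a b : Λ, a ≠ b → mul (p a) (p b) = 0)
    (hidem : ∀ a : Λ, mul (p a) (p a) = p a)
    (Γ Δ : Set (Λ × Λ))
    (PΓ PΔ Pinter : A →ₗ[ℝ] A)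
    (hPΓ : ∀ x : A, 0 ≤ x →
      IsLUB ({y : A | ∃ ab ∈ Γ, y = mul (p ab.1) (mul x (p ab.2))} ∪ {0}) (PΓ x))
    (hPΔ : ∀ x : A, 0 ≤ x →
      IsLUB ({y : A | ∃ ab ∈ Δ, y = mul (p ab.1) (mul x (p ab.2))} ∪ {0}) (PΔ x))
    (hPinter : ∀ x : A, 0 ≤ x →
      IsLUB ({y : A | ∃ ab ∈ Γ ∩ Δ, y = mul (p ab.1) (mul x (p ab.2))} ∪ {0}) (Pinter x))
    (x : A) (hx : 0 ≤ x) : PΓ (PΔ x) = Pinter x := by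
  classical
  have hPΔx : (0:A) ≤ PΔ x := (hPΔ x hx).1 (Set.mem_union_right _ rfl)
  set T : Λ → Λ → (A →ₗ[ℝ] A) := fun a b => (mul (p a)) ∘ₗ (mul.flip (p b)) with hT
  have hTapp : ∀ a b (y : A), T a b y = mul (p a) (mul y (p b)) := fun _ _ _ => rfl
  have hTgood : ∀ a b (y : A), 0 ≤ y → 0 ≤ T a b y ∧ T a b y ≤ y := by
    intro a b y hy
    rw [hTapp]
    have h1 : (0:A) ≤ mul y (p b) := mul_nonneg _ _ hy (hpos b)
    exact ⟨mul_nonneg _ _ (hpos a) h1, le_trans (hL a _ h1).1 (hR b y hy).1⟩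
  have hTcalc : ∀ a b c d (y : A),
      T a b (mul (p c) (mul y (p d))) = mul (mul (p a) (p c)) (mul y (mul (p d) (p b))) := by
    intro a b c d y
    rw [hTapp, mul_assoc (p c) (mul y (p d)) (p b), mul_assoc y (p d) (p b),
      ← mul_assoc (p a) (p c)]
  have hTval : ∀ a b c d (y : A),
      T a b (mul (p c) (mul y (p d)))
        = if c = a ∧ d = b then mul (p a) (mul y (p b)) else 0 := by
    intro a b c d y
    rw [hTcalc]
    by_cases h1 : c = a
    · subst h1
      by_cases h2 : d = b
      · subst h2
        simp [hidem]
      · have h0 : mul (p d) (p b) = 0 := horth d b h2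
        rw [h0, if_neg (fun h => h2 h.2)]
        simp
    · have h0 : mul (p a) (p c) = 0 := horth a c (fun h => h1 h.symm)
      rw [h0, if_neg (fun h => h1 h.1)]
      simp
  have hTlub : ∀ a b : Λ, IsLUB ((T a b) ''
      ({y : A | ∃ ab ∈ Δ, y = mul (p ab.1) (mul x (p ab.2))} ∪ {0})) (T a b (PΔ x)) :=
    fun a b => lub_map_aux (T a b) (hTgood a b) (hPΔ x hx)
  have hE0 : ∀ a b : Λ, (0:A) ≤ mul (p a) (mul x (p b)) :=
    fun a b => mul_nonneg _ _ (hpos a) (mul_nonneg _ _ hx (hpos b))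
  have hTvalx : ∀ a b : Λ,
      T a b (PΔ x) = if (a, b) ∈ Δ then mul (p a) (mul x (p b)) else 0 := by
    intro a b
    by_cases hmem : (a, b) ∈ Δ
    · rw [if_pos hmem]
      refine (hTlub a b).unique ?_
      constructor
      · rintro _ ⟨t, ht, rfl⟩
        rcases ht with ⟨cd, hcd, rfl⟩ | ht
        · rw [hTval a b cd.1 cd.2 x]
          split
          · exact le_refl _
          · exact hE0 a b
        · simp only [Set.mem_singleton_iff] at ht
          subst ht
          simpa using hE0 a b
      · intro u hu
        exact hu ⟨mul (p a) (mul x (p b)), Or.inl ⟨(a, b), hmem, rfl⟩,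
          by rw [hTval a b a b x]; simp⟩
    · rw [if_neg hmem]
      refine (hTlub a b).unique ?_
      constructor
      · rintro _ ⟨t, ht, rfl⟩
        rcases ht with ⟨cd, hcd, rfl⟩ | ht
        · rw [hTval a b cd.1 cd.2 x]
          split
          · next h =>
              exfalso
              apply hmem
              have hcdeq : cd = (a, b) := Prod.ext_iff.mpr ⟨h.1, h.2⟩
              rwa [hcdeq] at hcd
          · exact le_refl _
        · simp only [Set.mem_singleton_iff] at ht
          subst ht
          simp
      · intro u hu
        exact hu ⟨0, Set.mem_union_right _ rfl, map_zero _⟩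
  have hset : ({y : A | ∃ ab ∈ Γ, y = mul (p ab.1) (mul (PΔ x) (p ab.2))} ∪ {0})
      = ({y : A | ∃ ab ∈ Γ ∩ Δ, y = mul (p ab.1) (mul x (p ab.2))} ∪ {0}) := by
    ext y
    simp only [Set.mem_union, Set.mem_setOf_eq, Set.mem_singleton_iff, Set.mem_inter_iff]
    constructor
    · rintro (⟨ab, hab, rfl⟩ | rfl)
      · have hv := hTvalx ab.1 ab.2
        rw [hTapp] at hv
        by_cases hmem : (ab.1, ab.2) ∈ Δ
        · left
          exact ⟨ab, ⟨hab, by simpa using hmem⟩, by rw [hv, if_pos hmem]⟩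
        · right
          rw [hv, if_neg hmem]
      · right; rfl
    · rintro (⟨ab, ⟨hab1, hab2⟩, rfl⟩ | rfl)
      · left
        refine ⟨ab, hab1, ?_⟩
        have hv := hTvalx ab.1 ab.2
        rw [hTapp, if_pos (show ((ab.1, ab.2) : Λ × Λ) ∈ Δ by simpa using hab2)] at hv
        exact hv.symm
      · right; rfl
  have h1 := hPΓ (PΔ x) hPΔx
  rw [hset] at h1
  exact h1.unique (hPinter x hx)

end aux

/-- With the notation of the construction of inner band projections,
`P_Γ ∘ P_Δ = P_{Γ∩Δ}` and `P_Γ + P_Δ − P_Γ ∘ P_Δ = P_{Γ∪Δ}`; in particular the inner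
band projections form a Boolean algebra. -/
theorem inner_band_projections_boolean_algebra
    {A : Type*} [NormedAddCommGroup A] [Lattice A] [IsOrderedAddMonoid A] [HasSolidNorm A]
    [NormedSpace ℝ A]
    [PosSMulStrictMono ℝ A] [CompleteSpace A]
    -- order completeness
    (order_complete : ∀ S : Set A, S.Nonempty → BddAbove S → ∃ b : A, IsLUB S b)
    (mul : A →ₗ[ℝ] A →ₗ[ℝ] A)
    (mul_assoc : ∀ a b c : A, mul (mul a b) c = mul a (mul b c))
    (norm_mul_le : ∀ a b : A, ‖mul a b‖ ≤ ‖a‖ * ‖b‖)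
    (mul_nonneg : ∀ a b : A, 0 ≤ a → 0 ≤ b → 0 ≤ mul a b)
    {Λ : Type*} (p : Λ → A)
    (hpos : ∀ l, 0 ≤ p l)
    (hL : ∀ l, ∀ x : A, 0 ≤ x → mul (p l) x ≤ x ∧ mul (mul (p l) (p l)) x = mul (p l) x)
    (hR : ∀ l, ∀ x : A, 0 ≤ x → mul x (p l) ≤ x ∧ mul x (mul (p l) (p l)) = mul x (p l))
    (horth : ∀ a b : Λ, a ≠ b → mul (p a) (p b) = 0)
    (hidem : ∀ a : Λ, mul (p a) (p a) = p a)
    (Γ Δ : Set (Λ × Λ))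
    (PΓ PΔ Pinter Punion : A →ₗ[ℝ] A)
    (hPΓ : ∀ x : A, 0 ≤ x →
      IsLUB ({y : A | ∃ ab ∈ Γ, y = mul (p ab.1) (mul x (p ab.2))} ∪ {0}) (PΓ x))
    (hPΔ : ∀ x : A, 0 ≤ x →
      IsLUB ({y : A | ∃ ab ∈ Δ, y = mul (p ab.1) (mul x (p ab.2))} ∪ {0}) (PΔ x))
    (hPinter : ∀ x : A, 0 ≤ x →
      IsLUB ({y : A | ∃ ab ∈ Γ ∩ Δ, y = mul (p ab.1) (mul x (p ab.2))} ∪ {0}) (Pinter x))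
    (hPunion : ∀ x : A, 0 ≤ x →
      IsLUB ({y : A | ∃ ab ∈ Γ ∪ Δ, y = mul (p ab.1) (mul x (p ab.2))} ∪ {0}) (Punion x)) :
    PΓ ∘ₗ PΔ = Pinter ∧ PΓ + PΔ - PΓ ∘ₗ PΔ = Punion := by
  classical
  -- positivity and contractivity of any such P
  have hgen : ∀ (Θ : Set (Λ × Λ)) (P : A →ₗ[ℝ] A),
      (∀ x : A, 0 ≤ x →
        IsLUB ({y : A | ∃ ab ∈ Θ, y = mul (p ab.1) (mul x (p ab.2))} ∪ {0}) (P x)) →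
      ∀ y : A, 0 ≤ y → 0 ≤ P y ∧ P y ≤ y := by
    intro Θ P hP y hy
    have h := hP y hy
    refine ⟨h.1 (Set.mem_union_right _ rfl), h.2 ?_⟩
    rintro t (⟨ab, hab, rfl⟩ | rfl)
    · have h1 : (0:A) ≤ mul y (p ab.2) := mul_nonneg _ _ hy (hpos _)
      exact le_trans (hL ab.1 _ h1).1 (hR ab.2 y hy).1
    · exact hy
  have hPΓg := hgen Γ PΓ hPΓ
  have hPΔg := hgen Δ PΔ hPΔ
  have hPΓΓ : ∀ x : A, 0 ≤ x →
      IsLUB ({y : A | ∃ ab ∈ Γ ∩ Γ, y = mul (p ab.1) (mul x (p ab.2))} ∪ {0}) (PΓ x) := by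
    simpa [Set.inter_self] using hPΓ
  have hPΔΔ : ∀ x : A, 0 ≤ x →
      IsLUB ({y : A | ∃ ab ∈ Δ ∩ Δ, y = mul (p ab.1) (mul x (p ab.2))} ∪ {0}) (PΔ x) := by
    simpa [Set.inter_self] using hPΔ
  have hΓΓ : ∀ x : A, 0 ≤ x → PΓ (PΓ x) = PΓ x :=
    key_comp_aux mul mul_assoc mul_nonneg p hpos hL hR horth hidem Γ Γ PΓ PΓ PΓ hPΓ hPΓ hPΓΓ
  have hΔΔ : ∀ x : A, 0 ≤ x → PΔ (PΔ x) = PΔ x :=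
    key_comp_aux mul mul_assoc mul_nonneg p hpos hL hR horth hidem Δ Δ PΔ PΔ PΔ hPΔ hPΔ hPΔΔ
  have hcomp : ∀ x : A, 0 ≤ x → PΓ (PΔ x) = Pinter x :=
    key_comp_aux mul mul_assoc mul_nonneg p hpos hL hR horth hidem Γ Δ PΓ PΔ Pinter hPΓ hPΔ hPinter
  -- union part, pointwise on positives
  have hu : ∀ x : A, 0 ≤ x → Punion x = PΓ x ⊔ PΔ x := by
    intro x hx
    have hsets : ({y : A | ∃ ab ∈ Γ ∪ Δ, y = mul (p ab.1) (mul x (p ab.2))} ∪ {0})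
        = (({y : A | ∃ ab ∈ Γ, y = mul (p ab.1) (mul x (p ab.2))} ∪ {0}) ∪
           ({y : A | ∃ ab ∈ Δ, y = mul (p ab.1) (mul x (p ab.2))} ∪ {0})) := by
      ext y
      simp only [Set.mem_union, Set.mem_setOf_eq, Set.mem_singleton_iff]
      constructor
      · rintro (⟨ab, hab | hab, rfl⟩ | rfl)
        · exact Or.inl (Or.inl ⟨ab, hab, rfl⟩)
        · exact Or.inr (Or.inl ⟨ab, hab, rfl⟩)
        · exact Or.inl (Or.inr rfl)
      · rintro ((⟨ab, hab, rfl⟩ | rfl) | (⟨ab, hab, rfl⟩ | rfl))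
        · exact Or.inl ⟨ab, Or.inl hab, rfl⟩
        · exact Or.inr rfl
        · exact Or.inl ⟨ab, Or.inr hab, rfl⟩
        · exact Or.inr rfl
    have h1 := hPunion x hx
    rw [hsets] at h1
    exact h1.unique ((hPΓ x hx).union (hPΔ x hx))
  have hi : ∀ x : A, 0 ≤ x → PΓ x ⊓ PΔ x = PΓ (PΔ x) := fun x hx =>
    band_inf_aux PΓ PΔ hPΓg hPΔg hx (hΓΓ x hx) (hΔΔ x hx)
  -- pointwise union identity on positives
  have hup : ∀ x : A, 0 ≤ x → PΓ x + PΔ x - PΓ (PΔ x) = Punion x := by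
    intro x hx
    rw [← hi x hx, hu x hx, ← inf_add_sup (PΓ x) (PΔ x), add_sub_cancel_left]
  constructor
  · apply LinearMap.ext
    intro x
    have h₁ := hcomp (x⁺) (posPart_nonneg x)
    have h₂ := hcomp (x⁻) (negPart_nonneg x)
    have h : (PΓ ∘ₗ PΔ) (x⁺ - x⁻) = Pinter (x⁺ - x⁻) := by
      simp only [map_sub, LinearMap.comp_apply]
      rw [h₁, h₂]
    simpa [posPart_sub_negPart] using h
  · apply LinearMap.ext
    intro x
    have h₁ := hup (x⁺) (posPart_nonneg x)
    have h₂ := hup (x⁻) (negPart_nonneg x)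
    have h : (PΓ + PΔ - PΓ ∘ₗ PΔ) (x⁺ - x⁻) = Punion (x⁺ - x⁻) := by
      simp only [map_sub, map_add, LinearMap.sub_apply, LinearMap.add_apply,
        LinearMap.comp_apply]
      rw [← h₁, ← h₂]
    simpa [posPart_sub_negPart] using h
end

section
/- Let X be an order complete Banach lattice and let A : X → X be a positive bounded linear operator (x ≥ 0 implies Ax ≥ 0). Then the multiplication operator L_A R_A : T ↦ A∘T∘A is a band projection on the space of regular operators on X — equivalently, for every positive bounded linear operator T : X → X one has A∘T∘A ≤ T (i.e., A(T(Ax)) ≤ Tx for all x ≥ 0) and A²∘T∘A² = A∘T∘A — if and only if A is a band projection on X, i.e., A∘A = A and Ax ≤ x for every x ≥ 0. -/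
/-- Let `X` be an order complete Banach lattice and `A` a positive
bounded operator on `X`. Then `L_A R_A : T ↦ A∘T∘A` is a band projection on the
regular operators — i.e. `A∘T∘A ≤ T` and `A²∘T∘A² = A∘T∘A` for every positive bounded
operator `T` — if and only if `A` is a band projection on `X`. -/
theorem multiplication_operator_band_projection_iff
    {X : Type*} [NormedAddCommGroup X] [Lattice X] [HasSolidNorm X]
    [IsOrderedAddMonoid X] [NormedSpace ℝ X]
    [PosSMulStrictMono ℝ X] [CompleteSpace X]
    -- order completeness
    (order_complete : ∀ S : Set X, S.Nonempty → BddAbove S → ∃ b : X, IsLUB S b)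
    (A : X →L[ℝ] X) (hA : ∀ x : X, 0 ≤ x → 0 ≤ A x) :
    (∀ T : X →L[ℝ] X, (∀ x : X, 0 ≤ x → 0 ≤ T x) →
      (∀ x : X, 0 ≤ x → A (T (A x)) ≤ T x) ∧
      (∀ x : X, A (A (T (A (A x)))) = A (T (A x)))) ↔
    ((∀ x : X, A (A x) = A x) ∧ (∀ x : X, 0 ≤ x → A x ≤ x)) := by
  constructor
  · intro H
    -- Key step: `A (A y) = A y` for every `y ≥ 0`.
    have key : ∀ y : X, 0 ≤ y → A (A y) = A y := by
      intro y hy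
      by_cases hu : A y = 0
      · rw [hu, map_zero]
      · have hu0 : 0 ≤ A y := hA y hy
        -- find a positive continuous functional `f` with `f (A y) > 0`
        obtain ⟨f, hf, hfu⟩ : ∃ f : X →L[ℝ] ℝ, (∀ x : X, 0 ≤ x → 0 ≤ f x) ∧ 0 < f (A y) := by
          have hclosed : IsClosed (Set.Ici (0 : X)) := isClosed_Ici
          have hconv : Convex ℝ (Set.Ici (0 : X)) := convex_Ici 0
          have hnot : -(A y) ∉ Set.Ici (0 : X) := by
            intro h
            exact hu (le_antisymm (neg_nonneg.mp h) hu0)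
          obtain ⟨g, c, hgc, hcg⟩ := geometric_hahn_banach_closed_point hconv hclosed hnot
          have hc0 : 0 < c := by simpa using hgc 0 (le_refl 0)
          refine ⟨-g, fun x hx => ?_, ?_⟩
          · by_contra hgx
            push_neg at hgx
            have hgx' : 0 < g x := by
              have : -g x < 0 := by simpa using hgx
              linarith [this]
            have ht : (c / g x) • x ∈ Set.Ici (0 : X) :=
              smul_nonneg (le_of_lt (div_pos hc0 hgx')) hx
            have h2 := hgc _ ht
            rw [map_smul] at h2
            rw [smul_eq_mul, div_mul_cancel₀ c (ne_of_gt hgx')] at h2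
            exact lt_irrefl c h2
          · have h3 : c < g (-(A y)) := hcg
            rw [map_neg] at h3
            simp only [ContinuousLinearMap.neg_apply]
            linarith
        -- apply the hypothesis to the rank-one operator `T x = f x • y`
        set T := f.smulRight y with hT
        have hTpos : ∀ x : X, 0 ≤ x → 0 ≤ T x := fun x hx => smul_nonneg (hf x hx) hy
        have heq := (H T hTpos).2 y
        simp only [hT, ContinuousLinearMap.smulRight_apply, map_smul] at heq
        -- heq : f (A (A y)) • A (A y) = f (A y) • A y
        have hd : 0 ≤ f (A (A y)) := hf _ (hA _ hu0)
        have he : 0 < f (A y) := hfu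
        have h2 : f (A (A y)) * f (A (A y)) = f (A y) * f (A y) := by
          have h3 := congrArg f heq
          simpa [map_smul, smul_eq_mul] using h3
        have hde : f (A (A y)) = f (A y) := by nlinarith
        rw [hde] at heq
        exact smul_right_injective X (ne_of_gt he) heq
    have hid : ∀ x : X, 0 ≤ x → A (A x) ≤ x :=
      (H (ContinuousLinearMap.id ℝ X) (fun x hx => hx)).1
    have hle : ∀ x : X, 0 ≤ x → A x ≤ x := by
      intro x hx
      have h1 := hid x hx
      rwa [key x hx] at h1
    refine ⟨fun x => ?_, hle⟩
    have hdecomp : x⁺ - x⁻ = x := posPart_sub_negPart x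
    have h1 := key x⁺ (posPart_nonneg x)
    have h2 := key x⁻ (negPart_nonneg x)
    calc A (A x) = A (A (x⁺ - x⁻)) := by rw [hdecomp]
      _ = A (A x⁺) - A (A x⁻) := by rw [map_sub, map_sub]
      _ = A x⁺ - A x⁻ := by rw [h1, h2]
      _ = A (x⁺ - x⁻) := by rw [map_sub]
      _ = A x := by rw [hdecomp]
  · rintro ⟨hidem, hle⟩ T hT
    constructor
    · intro x hx
      have h1 : A x ≤ x := hle x hx
      have h2 : 0 ≤ A x := hA x hx
      have h3 : T (A x) ≤ T x := by
        have h4 := hT (x - A x) (sub_nonneg.mpr h1)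
        rw [map_sub] at h4
        exact sub_nonneg.mp h4
      exact (hle _ (hT _ h2)).trans h3
    · intro x
      rw [hidem x, hidem (T (A x))]
end
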